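/- Let M be a matroid with finite ground set and let X be a parallel class of M with |X| = p+1. If X is not a cocircuit of M, then T_M(x,y) = T_{M \setminus X}(x,y) + (y^p + y^{p-1} + \cdots + y + 1) T_{M/X}(x,y). -/

import Mathlib

open MvPolynomial Finset
open scoped Matroid

namespace TuttePaper

open Classical

variable {α : Type*}

/-- The rank of a set in a matroid: the maximum cardinality of an independent subset. -/
noncomputable def rk (M : Matroid α) (A : Set α) : ℕ :=
  sSup {n | ∃ I, M.Indep I ∧ I ⊆ A ∧ I.ncard = n}

/-- The Tutte polynomial of a matroid with finite ground set, as an element of ℤ[x,y];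
the variable `X 0` plays the role of `x` and `X 1` that of `y`:
`T_M(x,y) = ∑_{A ⊆ E} (x-1)^(r(E)-r(A)) (y-1)^(|A|-r(A))`. -/
noncomputable def tutte (M : Matroid α) : MvPolynomial (Fin 2) ℤ :=
  if hE : M.E.Finite then
    ∑ A ∈ hE.toFinset.powerset,
      (X 0 - 1) ^ (rk M M.E - rk M ↑A) * (X 1 - 1) ^ (A.card - rk M ↑A)
  else 0

/-- The Tutte polynomial with `x` evaluated at `1`, i.e. `T_M(1,y)`, as an element of ℤ[x,y]. -/
noncomputable def tutteX1 (M : Matroid α) : MvPolynomial (Fin 2) ℤ :=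
  eval₂ C (fun i => if i = 0 then 1 else X 1) (tutte M)

/-- A loop of a matroid: an element whose singleton has rank zero. -/
def IsLoop (M : Matroid α) (e : α) : Prop := rk M {e} = 0

/-- A coloop of a matroid: an element contained in every basis. -/
def IsColoop (M : Matroid α) (e : α) : Prop := ∀ B, M.IsBase B → e ∈ B

/-- A circuit of a matroid: a minimal dependent set. -/
def IsCircuit (M : Matroid α) (C : Set α) : Prop :=
  C ⊆ M.E ∧ ¬ M.Indep C ∧ ∀ D ⊂ C, M.Indep D

/-- A hyperplane of a matroid: a flat of rank `r(M) - 1`. -/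
def IsHyperplane (M : Matroid α) (H : Set α) : Prop :=
  M.IsFlat H ∧ rk M H + 1 = rk M M.E

/-- Deletion of a set of elements from a matroid. -/
def deleteSet (M : Matroid α) (D : Set α) : Matroid α := M ↾ (M.E \ D)

/-- Contraction of a set of elements in a matroid, `M/C = (M✶ \ C)✶`. -/
def contractSet (M : Matroid α) (C : Set α) : Matroid α := ((M✶) ↾ (M.E \ C))✶

/-- Deletion of a single element. -/
def deleteElem (M : Matroid α) (e : α) : Matroid α := deleteSet M {e}

/-- Contraction of a single element. -/
def contractElem (M : Matroid α) (e : α) : Matroid α := contractSet M {e}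

/-- A matroid is paving if every circuit has size at least the rank of the matroid. -/
def Paving (M : Matroid α) : Prop := ∀ C, IsCircuit M C → rk M M.E ≤ C.ncard

/-- A matroid is sparse paving if it is paving and any two distinct circuits of size `r(M)`
have symmetric difference of size greater than two. -/
def SparsePaving (M : Matroid α) : Prop :=
  Paving M ∧ ∀ C₁ C₂, IsCircuit M C₁ → IsCircuit M C₂ →
    C₁.ncard = rk M M.E → C₂.ncard = rk M M.E → C₁ ≠ C₂ → 2 < (symmDiff C₁ C₂).ncard

/-- An `m`-partition of a set `E`: a collection of at least two subsets of `E`, each with at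
least `m` elements, such that every `m`-element subset of `E` is contained in exactly one
member of the collection. -/
def IsMPartition (m : ℕ) (E : Set α) (T : Set (Set α)) : Prop :=
  1 < T.ncard ∧ (∀ B ∈ T, B ⊆ E ∧ m ≤ B.ncard) ∧
    ∀ S ⊆ E, S.ncard = m → ∃! B, B ∈ T ∧ S ⊆ B

/-- `tcoef M i j` is the coefficient `t_{ij}` of `x^i y^j` in the Tutte polynomial of `M`. -/
noncomputable def tcoef (M : Matroid α) (i j : ℕ) : ℤ :=
  MvPolynomial.coeff (Finsupp.single (0 : Fin 2) i + Finsupp.single (1 : Fin 2) j) (tutte M)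

/-- The characteristic polynomial `χ_N(λ) = ∑_{A ⊆ E} (-1)^{|A|} λ^{r(E)-r(A)}` of a matroid,
evaluated at an element `l` of a commutative ring. -/
noncomputable def charEval {R : Type*} [CommRing R] (N : Matroid α) (l : R) : R :=
  if hE : N.E.Finite then
    ∑ A ∈ hE.toFinset.powerset, (-1 : R) ^ A.card * l ^ (rk N N.E - rk N ↑A)
  else 0

/-- Crapo's coboundary polynomial `χ̄_M(λ,t) = ∑_{X flat of M} t^{|X|} χ_{M/X}(λ)`,
evaluated at elements `l`, `t` of a commutative ring. -/
noncomputable def cobEval {R : Type*} [CommRing R] (M : Matroid α) (l t : R) : R :=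
  if hE : M.E.Finite then
    (hE.toFinset.powerset.filter (fun F : Finset α => M.IsFlat ↑F)).sum
      (fun F => t ^ F.card * charEval (contractSet M ↑F) l)
  else 0


/-- A parallel class of a matroid: a maximal subset of the ground set in which any two
distinct elements are parallel (i.e. form a two-element circuit) and no element is a loop. -/
def IsParallelClass (M : Matroid α) (P : Set α) : Prop :=
  P ⊆ M.E ∧ (∀ a ∈ P, ¬ IsLoop M a) ∧
    (∀ a ∈ P, ∀ b ∈ P, a ≠ b → IsCircuit M {a, b}) ∧
    ∀ Q, P ⊆ Q → Q ⊆ M.E → (∀ a ∈ Q, ¬ IsLoop M a) →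
      (∀ a ∈ Q, ∀ b ∈ Q, a ≠ b → IsCircuit M {a, b}) → Q = P

section Aux
open Set

variable {M : Matroid α} {A B S I J P : Set α} {e f a b : α}


lemma rk_bddAbove (hE : M.E.Finite) (A : Set α) :
    BddAbove {n | ∃ I, M.Indep I ∧ I ⊆ A ∧ I.ncard = n} := by
  refine ⟨M.E.ncard, ?_⟩
  rintro n ⟨I, hI, -, rfl⟩
  exact Set.ncard_le_ncard hI.subset_ground hE

lemma le_rk (hE : M.E.Finite) (hI : M.Indep I) (hIA : I ⊆ A) : I.ncard ≤ rk M A :=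
  le_csSup (rk_bddAbove hE A) ⟨I, hI, hIA, rfl⟩

lemma rk_eq_ncard_of_basis (hE : M.E.Finite) (h : M.IsBasis I A) : rk M A = I.ncard := by
  refine IsGreatest.csSup_eq ⟨⟨I, h.indep, h.subset, rfl⟩, ?_⟩
  rintro n ⟨J, hJ, hJA, rfl⟩
  obtain ⟨K, hK, hJK⟩ := hJ.subset_isBasis_of_subset hJA h.subset_ground
  have h1 : K.encard = I.encard := hK.restrict_isBase.encard_eq_encard_of_isBase h.restrict_isBase
  have h2 : J.encard ≤ I.encard := (Set.encard_le_encard hJK).trans h1.le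
  have hIfin : I.Finite := hE.subset h.indep.subset_ground
  rw [Set.ncard, Set.ncard]
  exact ENat.toNat_le_toNat h2 hIfin.encard_lt_top.ne

lemma rk_le_ncard (hE : M.E.Finite) (hA : A ⊆ M.E) : rk M A ≤ A.ncard := by
  obtain ⟨I, hI⟩ := M.exists_isBasis A hA
  rw [rk_eq_ncard_of_basis hE hI]
  exact Set.ncard_le_ncard hI.subset (hE.subset hA)

lemma rk_union_of_subset_closure (hE : M.E.Finite) (hA : A ⊆ M.E) (hS : S ⊆ M.closure A) :
    rk M (A ∪ S) = rk M A := by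
  obtain ⟨I, hI⟩ := M.exists_isBasis A hA
  have hSE : S ⊆ M.E := hS.trans (M.closure_subset_ground A)
  have hbasis : M.IsBasis I (A ∪ S) :=
    hI.indep.isBasis_of_subset_of_subset_closure (hI.subset.trans subset_union_left)
      (union_subset hI.subset_closure (hS.trans_eq hI.closure_eq_closure.symm))
  rw [rk_eq_ncard_of_basis hE hbasis, rk_eq_ncard_of_basis hE hI]

lemma rk_restrict {R : Set α} (hA : A ⊆ R) : rk (M ↾ R) A = rk M A := by
  unfold rk
  congr 1
  ext n
  constructor
  · rintro ⟨I, hI, hIA, rfl⟩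
    exact ⟨I, (Matroid.restrict_indep_iff.mp hI).1, hIA, rfl⟩
  · rintro ⟨I, hI, hIA, rfl⟩
    exact ⟨I, Matroid.restrict_indep_iff.mpr ⟨hI, hIA.trans hA⟩, hIA, rfl⟩



lemma singleton_indep (hP : IsParallelClass M P) (he : e ∈ P) : M.Indep {e} := by
  have hne : rk M {e} ≠ 0 := hP.2.1 e he
  have hbdd : BddAbove {n | ∃ I, M.Indep I ∧ I ⊆ ({e} : Set α) ∧ I.ncard = n} := by
    refine ⟨1, ?_⟩
    rintro n ⟨I, hI, hIe, rfl⟩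
    exact (Set.ncard_le_ncard hIe (Set.finite_singleton e)).trans_eq (Set.ncard_singleton e)
  have hmem : rk M {e} ∈ {n | ∃ I, M.Indep I ∧ I ⊆ ({e} : Set α) ∧ I.ncard = n} :=
    Nat.sSup_mem ⟨0, ∅, M.empty_indep, empty_subset _, Set.ncard_empty α⟩ hbdd
  obtain ⟨I, hI, hIe, hcard⟩ := hmem
  rcases Set.subset_singleton_iff_eq.mp hIe with h | h
  · exact absurd (by rw [← hcard, h, Set.ncard_empty]) hne
  · rwa [h] at hI

lemma mem_closure_of_parallel (hP : IsParallelClass M P) (ha : a ∈ P) (hb : b ∈ P)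
    (hab : a ≠ b) : b ∈ M.closure {a} := by
  have hc := hP.2.2.1 a ha b hb hab
  have hia : M.Indep {a} := singleton_indep hP ha
  by_contra hbc
  have hind : M.Indep (insert b {a}) := by
    rw [hia.insert_indep_iff_of_notMem (by simp [hab.symm])]
    exact ⟨hP.1 hb, hbc⟩
  exact hc.2.1 (by rwa [Set.pair_comm b a] at hind)

lemma subset_closure_of_mem (hP : IsParallelClass M P) (he : e ∈ P) :
    P ⊆ M.closure {e} := by
  intro a ha
  rcases eq_or_ne a e with rfl | hne
  · exact M.subset_closure {a} (by simpa using hP.1 ha) rfl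
  · exact mem_closure_of_parallel hP he ha hne.symm

/-- transfer independence along parallel elements -/
lemma insert_indep_of_parallel (hfe : f ∈ M.closure {e}) (heE : e ∈ M.E)
    (heI : e ∉ I) (hfI : f ∉ I) (h : M.Indep (insert f I)) : M.Indep (insert e I) := by
  have hI : M.Indep I := h.subset (subset_insert _ _)
  by_contra hcon
  have hecl : e ∈ M.closure I := by
    by_contra hecl
    exact hcon (hI.insert_indep_iff_of_notMem heI |>.mpr ⟨heE, hecl⟩)
  have hclsub : M.closure {e} ⊆ M.closure I :=
    Matroid.closure_subset_closure_of_subset_closure (by simpa using hecl)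
  exact (hI.insert_dep_iff.mpr ⟨hclsub hfe, hfI⟩).not_indep h

lemma contract_indep_iff (hP : IsParallelClass M P) (he : e ∈ P) (hI : I ⊆ M.E \ P) :
    (contractSet M P).Indep I ↔ M.Indep (insert e I) := by
  have heE : e ∈ M.E := hP.1 he
  have heI : e ∉ I := fun h => (hI h).2 he
  constructor
  · intro hNI
    rw [contractSet, Matroid.dual_indep_iff_exists'] at hNI
    obtain ⟨-, B', hB', hdisj⟩ := hNI
    rw [Matroid.isBase_restrict_iff'] at hB'
    have hB'b : M✶.IsBasis B' (M.E \ P) :=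
      hB'.isBasis (by rw [Matroid.dual_ground]; exact diff_subset)
    obtain ⟨Bs, hBs, hB'eq⟩ := hB'b.exists_isBase
    have hbP : M.IsBasis ((M.E \ Bs) ∩ P) P := by
      have h1 : M✶.IsBasis (Bs ∩ (M.E \ P)) (M.E \ P) := by rw [← hB'eq]; exact hB'b
      have h2 := hBs.compl_inter_isBasis_of_inter_isBasis h1
      rwa [Matroid.dual_dual, Matroid.dual_ground, Set.diff_diff_cancel_left hP.1] at h2
    have hne : ((M.E \ Bs) ∩ P).Nonempty := by
      rcases Set.eq_empty_or_nonempty ((M.E \ Bs) ∩ P) with h | h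
      · exfalso
        rw [h] at hbP
        exact (hbP.insert_dep ⟨he, Set.notMem_empty e⟩).not_indep
          (by simpa using singleton_indep hP he)
      · exact h
    obtain ⟨f, hf⟩ := hne
    have hfP : f ∈ P := hf.2
    have hIBs : I ⊆ M.E \ Bs := by
      intro x hx
      refine ⟨(hI hx).1, fun hxB => ?_⟩
      exact (Set.disjoint_left.mp hdisj hx) (by rw [hB'eq]; exact ⟨hxB, hI hx⟩)
    have hfI : f ∉ I := fun h => (hI h).2 hfP
    have hind : M.Indep (insert f I) :=
      (hBs.compl_isBase_of_dual).indep.subset (Set.insert_subset hf.1 hIBs)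
    rcases eq_or_ne e f with rfl | hef
    · exact hind
    · exact insert_indep_of_parallel (mem_closure_of_parallel hP he hfP hef) heE heI hfI hind
  · intro hMi
    obtain ⟨Bb, hBb, hsub⟩ := hMi.exists_isBase_superset
    have hBP : Bb ∩ P = {e} := by
      apply Set.eq_singleton_iff_unique_mem.mpr
      refine ⟨⟨hsub (Set.mem_insert e I), he⟩, fun g hg => ?_⟩
      by_contra hge
      have hcirc := hP.2.2.1 e he g hg.2 (Ne.symm hge)
      exact hcirc.2.1 (hBb.indep.subset
        (Set.insert_subset (hsub (Set.mem_insert e I)) (by simpa using hg.1)))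
    have hbP : M.IsBasis (Bb ∩ P) P := by
      rw [hBP]
      exact (singleton_indep hP he).isBasis_of_subset_of_subset_closure (by simpa using he)
        (subset_closure_of_mem hP he)
    have hdb := hBb.compl_inter_isBasis_of_inter_isBasis hbP
    rw [contractSet, Matroid.dual_indep_iff_exists']
    refine ⟨hI, (M.E \ Bb) ∩ (M.E \ P), ?_, ?_⟩
    · rw [Matroid.isBase_restrict_iff']
      exact hdb.isBasis'
    · rw [Set.disjoint_left]
      intro x hx hmem
      exact hmem.1.2 (hsub (Set.mem_insert_of_mem _ hx))

lemma contract_ground : (contractSet M P).E = M.E \ P := rfl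

lemma rk_contract (hE : M.E.Finite) (hP : IsParallelClass M P) (he : e ∈ P)
    (hB : B ⊆ M.E \ P) : rk M (B ∪ {e}) = rk (contractSet M P) B + 1 := by
  set N := contractSet M P with hN
  have hNE : N.E = M.E \ P := rfl
  have hNfin : N.E.Finite := by rw [hNE]; exact hE.diff
  obtain ⟨I, hI⟩ := N.exists_isBasis B (by rw [hNE]; exact hB)
  have hIEP : I ⊆ M.E \ P := hI.subset.trans hB
  have heI : e ∉ I := fun h => (hIEP h).2 he
  have heE : e ∈ M.E := hP.1 he
  have hIindep : M.Indep (insert e I) := (contract_indep_iff hP he hIEP).mp hI.indep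
  have hIfin : I.Finite := hE.subset fun x hx => (hIEP hx).1
  have hsubE : insert e I ⊆ M.E := Set.insert_subset heE fun y hy => (hIEP hy).1
  have hbasis : M.IsBasis (insert e I) (B ∪ {e}) := by
    refine hIindep.isBasis_of_subset_of_subset_closure
      (Set.insert_subset (Set.mem_union_right B rfl)
        (hI.subset.trans Set.subset_union_left)) ?_
    rintro x (hxB | hxe)
    · by_cases hxI : x ∈ I
      · exact M.subset_closure _ hsubE (Set.mem_insert_of_mem _ hxI)
      · by_contra hxcl
        have hxE : x ∈ M.E := (hB hxB).1
        have hxne : x ∉ insert e I := by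
          rintro (rfl | h)
          · exact (hB hxB).2 he
          · exact hxI h
        have hind2 : M.Indep (insert x (insert e I)) :=
          (hIindep.insert_indep_iff_of_notMem hxne).mpr ⟨hxE, hxcl⟩
        have hind3 : M.Indep (insert e (insert x I)) := by rwa [Set.insert_comm]
        have hNind : N.Indep (insert x I) :=
          (contract_indep_iff hP he (Set.insert_subset (hB hxB) hIEP)).mpr hind3
        exact (hI.insert_dep ⟨hxB, hxI⟩).not_indep hNind
    · rw [hxe]
      exact M.subset_closure _ hsubE (Set.mem_insert e I)
  rw [rk_eq_ncard_of_basis hE hbasis, rk_eq_ncard_of_basis hNfin hI,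
    Set.ncard_insert_of_notMem heI hIfin]

lemma rk_ground_diff_eq (hE : M.E.Finite) (hP : IsParallelClass M P)
    (hne : P.Nonempty) (hnc : ¬ IsCircuit (M✶) P) : rk M (M.E \ P) = rk M M.E := by
  have hindepD : ∀ D ⊂ P, (M✶).Indep D := by
    intro D hD
    obtain ⟨f, hfP, hfD⟩ := Set.exists_of_ssubset hD
    have hfE : f ∈ M.E := hP.1 hfP
    have hfED : f ∈ M.E \ D := ⟨hfE, hfD⟩
    have hDE : D ⊆ M.E := (hD.subset).trans hP.1
    have hcl : M.E ⊆ M.closure (M.E \ D) := by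
      intro x hx
      by_cases hxD : x ∈ D
      · rcases eq_or_ne x f with rfl | hxf
        · exact M.subset_closure _ diff_subset hfED
        · exact M.closure_subset_closure (Set.singleton_subset_iff.mpr hfED)
            (mem_closure_of_parallel hP hfP (hD.subset hxD) (Ne.symm hxf))
      · exact M.subset_closure _ diff_subset ⟨hx, hxD⟩
    obtain ⟨I, hI⟩ := M.exists_isBasis (M.E \ D) diff_subset
    have hIbase : M.IsBase I := hI.indep.isBase_of_ground_subset_closure
      (hcl.trans (by rw [hI.closure_eq_closure]))
    rw [← Matroid.coindep_def]
    exact (Matroid.coindep_iff_exists hDE).mpr ⟨I, hIbase, hI.subset⟩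
  have hPindep : (M✶).Indep P := by
    by_contra h
    exact hnc ⟨hP.1, h, hindepD⟩
  obtain ⟨Bb, hBb, hBbP⟩ := (Matroid.coindep_iff_exists hP.1).mp (Matroid.coindep_def.mpr hPindep)
  have h1 : rk M M.E = Bb.ncard := rk_eq_ncard_of_basis hE hBb.isBasis_ground
  have h2 : Bb.ncard ≤ rk M (M.E \ P) := le_rk hE hBb.indep hBbP
  have h3 : rk M (M.E \ P) ≤ rk M M.E := by
    obtain ⟨I, hI⟩ := M.exists_isBasis (M.E \ P) diff_subset
    rw [rk_eq_ncard_of_basis hE hI]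
    exact le_rk hE hI.indep hI.indep.subset_ground
  omega

lemma sum_powerset_union {β : Type*} [AddCommMonoid β] {u v : Finset α} (huv : Disjoint u v)
    (f : Finset α → β) :
    ∑ A ∈ (u ∪ v).powerset, f A = ∑ B ∈ u.powerset, ∑ S ∈ v.powerset, f (B ∪ S) := by
  have hrec : ∀ A ∈ (u ∪ v).powerset, (A ∩ u) ∪ (A ∩ v) = A := by
    intro A hA
    rw [Finset.mem_powerset] at hA
    ext x
    simp only [Finset.mem_union, Finset.mem_inter]
    constructor
    · rintro (⟨h, -⟩ | ⟨h, -⟩) <;> exact h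
    · intro h
      rcases Finset.mem_union.mp (hA h) with h' | h'
      · exact Or.inl ⟨h, h'⟩
      · exact Or.inr ⟨h, h'⟩
  rw [← Finset.sum_product']
  refine Finset.sum_nbij' (fun A => (A ∩ u, A ∩ v)) (fun p => p.1 ∪ p.2) ?_ ?_ hrec ?_ ?_
  · intro A hA
    simp only [Finset.mem_product, Finset.mem_powerset]
    exact ⟨Finset.inter_subset_right, Finset.inter_subset_right⟩
  · intro p hp
    simp only [Finset.mem_product, Finset.mem_powerset] at hp ⊢
    exact Finset.union_subset (hp.1.trans Finset.subset_union_left)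
      (hp.2.trans Finset.subset_union_right)
  · intro p hp
    simp only [Finset.mem_product, Finset.mem_powerset] at hp
    have h1 : (p.1 ∪ p.2) ∩ u = p.1 := by
      ext x
      simp only [Finset.mem_inter, Finset.mem_union]
      constructor
      · rintro ⟨h | h, hu⟩
        · exact h
        · exact absurd hu (Finset.disjoint_right.mp huv (hp.2 h))
      · intro h; exact ⟨Or.inl h, hp.1 h⟩
    have h2 : (p.1 ∪ p.2) ∩ v = p.2 := by
      ext x
      simp only [Finset.mem_inter, Finset.mem_union]
      constructor
      · rintro ⟨h | h, hv⟩
        · exact absurd hv (Finset.disjoint_left.mp huv (hp.1 h))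
        · exact h
      · intro h; exact ⟨Or.inr h, hp.2 h⟩
    exact Prod.ext h1 h2
  · intro A hA
    exact congrArg f (hrec A hA).symm

lemma x1_sub_one_ne_zero : (X 1 : MvPolynomial (Fin 2) ℤ) - 1 ≠ 0 := by
  intro h
  have h2 := congrArg MvPolynomial.totalDegree (sub_eq_zero.mp h)
  simpa using h2

lemma sum_powerset_sub_one_pow (q : ℕ) (Q : Finset α) (hQ : Q.card = q + 1) :
    ∑ S ∈ Q.powerset.erase ∅, ((X 1 : MvPolynomial (Fin 2) ℤ) - 1) ^ (S.card - 1)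
      = ∑ i ∈ range (q + 1), (X 1 : MvPolynomial (Fin 2) ℤ) ^ i := by
  apply mul_left_cancel₀ x1_sub_one_ne_zero
  have h1 : ∑ S ∈ Q.powerset, ((X 1 : MvPolynomial (Fin 2) ℤ) - 1) ^ S.card
      = (X 1 : MvPolynomial (Fin 2) ℤ) ^ (q + 1) := by
    have hpa := Finset.prod_add (fun _ : α => (X 1 : MvPolynomial (Fin 2) ℤ) - 1)
      (fun _ => (1 : MvPolynomial (Fin 2) ℤ)) Q
    simp only [sub_add_cancel, Finset.prod_const, Finset.prod_const_one, one_pow, mul_one,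
      hQ] at hpa
    exact hpa.symm
  have h2 : ((X 1 : MvPolynomial (Fin 2) ℤ) - 1) *
        ∑ S ∈ Q.powerset.erase ∅, ((X 1 : MvPolynomial (Fin 2) ℤ) - 1) ^ (S.card - 1)
      = ∑ S ∈ Q.powerset.erase ∅, ((X 1 : MvPolynomial (Fin 2) ℤ) - 1) ^ S.card := by
    rw [Finset.mul_sum]
    refine Finset.sum_congr rfl fun S hS => ?_
    have hSne : S ≠ ∅ := (Finset.mem_erase.mp hS).1
    have hc : 1 ≤ S.card := Finset.card_pos.mpr (Finset.nonempty_iff_ne_empty.mpr hSne)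
    rw [← pow_succ']
    congr 1
    omega
  have h3 : ∑ S ∈ Q.powerset.erase ∅, ((X 1 : MvPolynomial (Fin 2) ℤ) - 1) ^ S.card
      = (X 1 : MvPolynomial (Fin 2) ℤ) ^ (q + 1) - 1 := by
    have h4 := Finset.add_sum_erase Q.powerset
      (fun S => ((X 1 : MvPolynomial (Fin 2) ℤ) - 1) ^ S.card) (Finset.empty_mem_powerset Q)
    rw [h1] at h4
    simp only [Finset.card_empty, pow_zero] at h4
    exact eq_sub_of_add_eq ((add_comm _ _).trans h4)
  rw [h2, h3, mul_comm, geom_sum_mul]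


end Aux

/-- if `P` is a parallel class of size `p + 1` that is not a cocircuit, then
`T_M = T_{M∖P} + (y^p + ⋯ + y + 1) T_{M/P}`. -/
theorem tutte_parallelClass (M : Matroid α) (hE : M.E.Finite) (P : Set α) (p : ℕ)
    (hP : IsParallelClass M P) (hcard : P.ncard = p + 1) (hnc : ¬ IsCircuit (M✶) P) :
    tutte M = tutte (deleteSet M P)
      + (∑ i ∈ range (p + 1), X 1 ^ i) * tutte (contractSet M P) := by
  have hPfin : P.Finite := hE.subset hP.1
  have hPne : P.Nonempty := Set.nonempty_of_ncard_ne_zero (by omega)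
  obtain ⟨e, he⟩ := hPne
  have heE : e ∈ M.E := hP.1 he
  set N := contractSet M P with hNdef
  set M' := deleteSet M P with hM'def
  have hNfin : N.E.Finite := hE.diff
  have hM'fin : M'.E.Finite := hE.diff
  have hQF : hPfin.toFinset ⊆ hE.toFinset := by
    intro a ha
    rw [Set.Finite.mem_toFinset] at *
    exact hP.1 ha
  have hQcard : (hPfin.toFinset).card = p + 1 := by
    rw [← Set.ncard_eq_toFinset_card P hPfin]
    exact hcard
  set D := hE.toFinset \ hPfin.toFinset with hD
  have hsplit : hE.toFinset = D ∪ hPfin.toFinset := by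
    rw [hD]; exact (Finset.sdiff_union_of_subset hQF).symm
  have hDmem : ∀ B : Finset α, B ∈ D.powerset → (↑B : Set α) ⊆ M.E \ P := by
    intro B hB x hx
    have h := Finset.mem_powerset.mp hB hx
    rw [hD, Finset.mem_sdiff, Set.Finite.mem_toFinset, Set.Finite.mem_toFinset] at h
    exact h
  have hδ : rk M (M.E \ P) = rk M M.E := rk_ground_diff_eq hE hP ⟨e, he⟩ hnc
  have hrME : rk M M.E = rk N (M.E \ P) + 1 := by
    have hA : (M.E \ P) ∪ {e} ⊆ M.E := Set.union_subset Set.diff_subset (by simpa using heE)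
    have hcl : M.E ⊆ M.closure ((M.E \ P) ∪ {e}) := by
      intro x hx
      by_cases hxP : x ∈ P
      · exact M.closure_subset_closure (Set.singleton_subset_iff.mpr (Or.inr rfl))
          (subset_closure_of_mem hP he hxP)
      · exact M.subset_closure _ hA (Or.inl ⟨hx, hxP⟩)
    have h2 := rk_union_of_subset_closure hE hA hcl
    rw [Set.union_eq_right.mpr hA] at h2
    rw [h2]
    exact rk_contract hE hP he subset_rfl
  have hrk_union : ∀ B : Finset α, ↑B ⊆ M.E \ P → ∀ S : Finset α, ↑S ⊆ P → S.Nonempty →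
      rk M (↑B ∪ ↑S) = rk N ↑B + 1 := by
    rintro B hB S hS ⟨f, hf⟩
    have hfS : f ∈ (↑S : Set α) := hf
    have hfP : f ∈ P := hS hfS
    have hecl : e ∈ M.closure {f} := by
      rcases eq_or_ne f e with rfl | hfe
      · exact M.subset_closure {f} (by simpa using hP.1 hfP) rfl
      · exact mem_closure_of_parallel hP hfP he hfe
    have hBSE : (↑B : Set α) ∪ ↑S ⊆ M.E :=
      Set.union_subset (hB.trans Set.diff_subset) (hS.trans hP.1)
    have h1 : rk M ((↑B ∪ ↑S) ∪ {e}) = rk M (↑B ∪ ↑S) :=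
      rk_union_of_subset_closure hE hBSE (Set.singleton_subset_iff.mpr
        (M.closure_subset_closure (Set.singleton_subset_iff.mpr (Set.mem_union_right _ hfS)) hecl))
    have hBe : (↑B : Set α) ∪ {e} ⊆ M.E :=
      Set.union_subset (hB.trans Set.diff_subset) (by simpa using heE)
    have h2 : rk M ((↑B ∪ {e}) ∪ ↑S) = rk M (↑B ∪ {e}) :=
      rk_union_of_subset_closure hE hBe (hS.trans ((subset_closure_of_mem hP he).trans
        (M.closure_subset_closure Set.subset_union_right)))
    have hsets : ((↑B : Set α) ∪ ↑S) ∪ {e} = (↑B ∪ {e}) ∪ ↑S := by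
      rw [Set.union_right_comm]
    rw [← h1, hsets, h2]
    exact rk_contract hE hP he hB
  have hinner : ∀ B : Finset α, ↑B ⊆ M.E \ P →
      ∑ S ∈ (hPfin.toFinset).powerset,
        ((X 0 : MvPolynomial (Fin 2) ℤ) - 1) ^ (rk M M.E - rk M ↑(B ∪ S)) *
          (X 1 - 1) ^ ((B ∪ S).card - rk M ↑(B ∪ S))
      = (((X 0 : MvPolynomial (Fin 2) ℤ) - 1) ^ (rk M M.E - rk M ↑B) *
          (X 1 - 1) ^ (B.card - rk M ↑B))
        + (∑ i ∈ range (p + 1), (X 1 : MvPolynomial (Fin 2) ℤ) ^ i) *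
          (((X 0 : MvPolynomial (Fin 2) ℤ) - 1) ^ (rk N (M.E \ P) - rk N ↑B) *
            (X 1 - 1) ^ (B.card - rk N ↑B)) := by
    intro B hB
    rw [← Finset.add_sum_erase _ _ (Finset.empty_mem_powerset _)]
    congr 1
    · rw [Finset.union_empty]
    · rw [← sum_powerset_sub_one_pow p hPfin.toFinset hQcard, Finset.sum_mul]
      refine Finset.sum_congr rfl fun S hS => ?_
      rw [Finset.mem_erase, Finset.mem_powerset] at hS
      have hSP : (↑S : Set α) ⊆ P := by
        intro x hx
        have := hS.2 hx
        rwa [Set.Finite.mem_toFinset] at this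
      have hSne : S.Nonempty := Finset.nonempty_iff_ne_empty.mpr hS.1
      have hrk : rk M (↑B ∪ ↑S) = rk N ↑B + 1 := hrk_union B hB S hSP hSne
      have hdBS : Disjoint B S := Finset.disjoint_left.mpr fun x hxB hxS =>
        (hB hxB).2 (hSP hxS)
      have hcardU : (B ∪ S).card = B.card + S.card := Finset.card_union_of_disjoint hdBS
      have hle : rk N ↑B ≤ B.card := by
        have h := rk_le_ncard hNfin (show (↑B : Set α) ⊆ N.E from hB)
        rwa [Set.ncard_coe_finset] at h
      have hSc : 1 ≤ S.card := Finset.card_pos.mpr hSne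
      have e1 : rk M M.E - rk M ↑(B ∪ S) = rk N (M.E \ P) - rk N ↑B := by
        rw [Finset.coe_union, hrk, hrME]
        omega
      have e2 : (B ∪ S).card - rk M ↑(B ∪ S) = (B.card - rk N ↑B) + (S.card - 1) := by
        rw [Finset.coe_union, hrk, hcardU]
        omega
      rw [e1, e2, pow_add]
      ring
  have hM'toF : hM'fin.toFinset = D := by
    rw [hD]
    ext a
    simp only [Set.Finite.mem_toFinset, Finset.mem_sdiff, hM'def, deleteSet,
      Matroid.restrict_ground_eq, Set.mem_diff]
  have hNtoF : hNfin.toFinset = D := by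
    rw [hD]
    ext a
    simp only [Set.Finite.mem_toFinset, Finset.mem_sdiff, hNdef, contractSet,
      Matroid.dual_ground, Matroid.restrict_ground_eq, Set.mem_diff]
  have hrkM'E : rk M' M'.E = rk M M.E := by
    rw [show M' = M ↾ (M.E \ P) from rfl, show (M ↾ (M.E \ P)).E = M.E \ P from rfl,
      rk_restrict subset_rfl, hδ]
  have htutteM' : tutte M' = ∑ B ∈ (D).powerset,
      ((X 0 : MvPolynomial (Fin 2) ℤ) - 1) ^ (rk M M.E - rk M ↑B) *
        (X 1 - 1) ^ (B.card - rk M ↑B) := by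
    unfold tutte
    rw [dif_pos hM'fin, hM'toF]
    refine Finset.sum_congr rfl fun A hA => ?_
    have hAsub : (↑A : Set α) ⊆ M.E \ P := by
      intro x hx
      have := Finset.mem_powerset.mp hA hx
      rw [Finset.mem_sdiff, Set.Finite.mem_toFinset, Set.Finite.mem_toFinset] at this
      exact this
    rw [hrkM'E, show rk M' ↑A = rk M ↑A from rk_restrict hAsub]
  have htutteN : tutte N = ∑ B ∈ (D).powerset,
      ((X 0 : MvPolynomial (Fin 2) ℤ) - 1) ^ (rk N (M.E \ P) - rk N ↑B) *
        (X 1 - 1) ^ (B.card - rk N ↑B) := by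
    unfold tutte
    rw [dif_pos hNfin, hNtoF]
    exact Finset.sum_congr rfl fun A _ => rfl
  rw [htutteM', htutteN]
  unfold tutte
  rw [dif_pos hE, hsplit, sum_powerset_union Finset.sdiff_disjoint]
  rw [Finset.sum_congr rfl fun B hB => hinner B (hDmem B hB)]
  rw [Finset.sum_add_distrib, Finset.mul_sum]


end TuttePaper
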